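/- Let X be a compact manifold with boundary. There exists N ≥ 1 and a topological embedding i : X → ℝ^{N−1} × ℝ₊ such that i(∂X) ⊆ ℝ^{N−1} × {0} and i(interior X) ⊆ ℝ^{N−1} × (0, ∞). -/

import Mathlib

open scoped Manifold
open Set Topology Metric Function

section InteriorOpen

variable {n : ℕ} [NeZero n] {X : Type*} [TopologicalSpace X]
  [ChartedSpace (EuclideanHalfSpace n) X]
  [IsManifold (𝓡∂ n) (⊤ : ℕ∞) X]

/-- The manifold interior of a manifold modelled on the Euclidean half-space is open. -/
theorem aux_isOpen_mfd_interior : IsOpen ((𝓡∂ n).interior X) := by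
  set I := 𝓡∂ n with hI
  rw [isOpen_iff_mem_nhds]
  intro x hx
  set E := EuclideanSpace ℝ (Fin n)
  set S : Set E := range I with hSdef
  have hx' : extChartAt I x x ∈ interior S := hx
  set e := extChartAt I x with he
  have hW : IsOpen (e.source ∩ e ⁻¹' interior S) :=
    (continuousOn_extChartAt x).isOpen_inter_preimage (isOpen_extChartAt_source x)
      isOpen_interior
  refine Filter.mem_of_superset (hW.mem_nhds ⟨mem_extChartAt_source x, hx'⟩) ?_
  rintro y ⟨hy, hu⟩
  -- show `y` is an interior point
  set ey := extChartAt I y with hey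
  set u : E := e y with hu'
  have hSnhds : S ∈ 𝓝 u := mem_interior_iff_mem_nhds.mp hu
  -- the transition map `f = ey ∘ e.symm` and its inverse `g = e ∘ ey.symm`
  set f : E → E := ey ∘ e.symm with hf'
  set g : E → E := e ∘ ey.symm with hg'
  set t_u : Set E := (e.symm.trans ey).source with ht_u
  set t_v : Set E := (ey.symm.trans e).source with ht_v
  have ht_u_eq : t_u = e.target ∩ e.symm ⁻¹' ey.source := by
    rw [ht_u, PartialEquiv.trans_source, PartialEquiv.symm_source]
  have ht_v_eq : t_v = ey.target ∩ ey.symm ⁻¹' e.source := by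
    rw [ht_v, PartialEquiv.trans_source, PartialEquiv.symm_source]
  -- `e.target` is a genuine neighborhood of `u`
  have htarget : e.target ∈ 𝓝 u := by
    have h1 : e.target ∈ 𝓝[S] u := extChartAt_target_mem_nhdsWithin' hy
    rwa [nhdsWithin_eq_nhds.2 hSnhds] at h1
  have hesymmu : e.symm u = y := e.left_inv hy
  have hcontsymm : ContinuousAt e.symm u :=
    (continuousOn_extChartAt_symm x).continuousAt htarget
  have hpre : e.symm ⁻¹' ey.source ∈ 𝓝 u := by
    apply hcontsymm.preimage_mem_nhds
    rw [hesymmu]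
    exact extChartAt_source_mem_nhds y
  have ht_u_nhds : t_u ∈ 𝓝 u := by
    rw [ht_u_eq]; exact Filter.inter_mem htarget hpre
  -- smoothness of the transition maps
  have hone : (1 : WithTop ℕ∞) ≤ ((⊤ : ℕ∞) : WithTop ℕ∞) := by
    exact_mod_cast (le_top : (1 : ℕ∞) ≤ ⊤)
  have hfC : ContDiffAt ℝ ((⊤ : ℕ∞) : WithTop ℕ∞) f u :=
    (contDiffOn_ext_coord_change y x).contDiffAt ht_u_nhds
  have hgC : ContDiffOn ℝ ((⊤ : ℕ∞) : WithTop ℕ∞) g t_v := contDiffOn_ext_coord_change x y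
  have hut_u : u ∈ t_u := mem_of_mem_nhds ht_u_nhds
  have hfu : f u = ey y := by
    rw [hf', Function.comp_apply, hu', hesymmu]
  have hyey : y ∈ ey.source := mem_extChartAt_source y
  have hvt_v : ey y ∈ t_v := by
    rw [ht_v_eq]
    refine ⟨ey.map_source hyey, ?_⟩
    rw [mem_preimage, ey.left_inv hyey]
    exact hy
  -- derivative computations
  set A := fderiv ℝ f u with hA
  set B := fderivWithin ℝ g t_v (ey y) with hB
  have hfd : HasFDerivAt f A u := (hfC.differentiableAt ((zero_lt_one.trans_le hone).ne')).hasFDerivAt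
  have hgd : HasFDerivWithinAt g B t_v (ey y) :=
    ((hgC (ey y) hvt_v).differentiableWithinAt ((zero_lt_one.trans_le hone).ne')).hasFDerivWithinAt
  have hmaps : MapsTo f t_u t_v := by
    intro z hz
    rw [ht_u_eq] at hz
    rw [ht_v_eq]
    refine ⟨ey.map_source hz.2, ?_⟩
    rw [mem_preimage, hf', Function.comp_apply, ey.left_inv hz.2]
    exact e.map_target hz.1
  have hcomp : HasFDerivWithinAt (g ∘ f) (B.comp A) t_u u := by
    rw [← hfu] at hgd
    exact hgd.comp u hfd.hasFDerivWithinAt hmaps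
  have heqon : ∀ z ∈ t_u, id z = (g ∘ f) z := by
    intro z hz
    rw [ht_u_eq] at hz
    simp only [hf', hg', Function.comp_apply, id_eq]
    rw [ey.left_inv hz.2, e.right_inv hz.1]
  have hid : HasFDerivAt id (B.comp A) u :=
    (hcomp.congr heqon (heqon u hut_u)).hasFDerivAt ht_u_nhds
  have hBA : B.comp A = ContinuousLinearMap.id ℝ E := hid.unique (hasFDerivAt_id u)
  have hinj : Function.Injective A := by
    intro z w h
    have hz : B (A z) = z := by
      have := congrFun (congrArg DFunLike.coe hBA) z; simpa using this
    have hw : B (A w) = w := by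
      have := congrFun (congrArg DFunLike.coe hBA) w; simpa using this
    rw [← hz, ← hw, h]
  have hsurj : Function.Surjective (A : E →ₗ[ℝ] E) :=
    LinearMap.injective_iff_surjective.mp hinj
  let A' : E ≃L[ℝ] E :=
    LinearEquiv.toContinuousLinearEquiv
      (LinearEquiv.ofBijective (A : E →ₗ[ℝ] E) ⟨hinj, hsurj⟩)
  have hstrict : HasStrictFDerivAt f (A' : E →L[ℝ] E) u := by
    have h := hfC.hasStrictFDerivAt ((zero_lt_one.trans_le hone).ne')
    have : (A' : E →L[ℝ] E) = A := by ext z; rfl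
    rwa [this]
  -- conclude: `f` maps a neighborhood of `u` onto a neighborhood of `ey y` inside `S`
  have hmapnhds : Filter.map f (𝓝 u) = 𝓝 (f u) := hstrict.map_nhds_eq_of_equiv
  have hSv : S ∈ 𝓝 (ey y) := by
    rw [← hfu, ← hmapnhds, Filter.mem_map]
    refine Filter.mem_of_superset ht_u_nhds ?_
    intro z hz
    rw [ht_u_eq] at hz
    have : ey (e.symm z) ∈ ey.target := ey.map_source hz.2
    exact extChartAt_target_subset_range y this
  exact mem_interior_iff_mem_nhds.mpr hSv

theorem aux_isClosed_mfd_boundary : IsClosed ((𝓡∂ n).boundary X) := by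
  rw [← ModelWithCorners.compl_interior]
  exact aux_isOpen_mfd_interior.isClosed_compl

end InteriorOpen

/-- a compact manifold with boundary embeds in
`ℝ^{N−1} × ℝ₊` for some `N ≥ 1`, with the boundary landing exactly in the
hyperplane `ℝ^{N−1} × {0}` and the interior in the open half-space
`ℝ^{N−1} × (0, ∞)`. -/
theorem compact_manifold_with_boundary_embeds_in_half_space
    {n : ℕ} [NeZero n] {X : Type*} [TopologicalSpace X]
    [ChartedSpace (EuclideanHalfSpace n) X]
    [IsManifold (𝓡∂ n) (⊤ : ℕ∞) X]
    [CompactSpace X] [T2Space X] [SecondCountableTopology X] :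
    ∃ (N : ℕ) (hN : 0 < N) (i : X → EuclideanSpace ℝ (Fin N)),
      Topology.IsEmbedding i ∧
      (∀ x : X, 0 ≤ i x ⟨N - 1, by omega⟩) ∧
      (∀ x : X, x ∈ (𝓡∂ n).boundary X → i x ⟨N - 1, by omega⟩ = 0) ∧
      (∀ x : X, x ∈ (𝓡∂ n).interior X → 0 < i x ⟨N - 1, by omega⟩) := by
  classical
  -- Step 1: a continuous injective map `e' : X → EuclideanSpace ℝ (Fin M)`
  -- via charts and a partition of unity.
  have hcover : (univ : Set X) ⊆ ⋃ x : X, (chartAt (EuclideanHalfSpace n) x).source := by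
    intro x _
    exact mem_iUnion.mpr ⟨x, mem_chart_source _ x⟩
  obtain ⟨t, ht⟩ := isCompact_univ.elim_finite_subcover
    (fun x : X => (chartAt (EuclideanHalfSpace n) x).source)
    (fun x => (chartAt (EuclideanHalfSpace n) x).open_source) hcover
  set ι := {x : X // x ∈ t} with hι
  set U : ι → Set X := fun k => (chartAt (EuclideanHalfSpace n) k.1).source with hU
  have hUopen : ∀ k, IsOpen (U k) := fun k => (chartAt (EuclideanHalfSpace n) k.1).open_source
  have hUcover : (univ : Set X) ⊆ ⋃ k, U k := by
    intro x hx
    have := ht hx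
    simp only [mem_iUnion] at this ⊢
    obtain ⟨c, hc, hxc⟩ := this
    exact ⟨⟨c, hc⟩, hxc⟩
  obtain ⟨ρ, hρ⟩ := PartitionOfUnity.exists_isSubordinate isClosed_univ U hUopen hUcover
  set φ : ι → X → EuclideanSpace ℝ (Fin n) :=
    fun k x => ((chartAt (EuclideanHalfSpace n) k.1) x).1 with hφ
  have hφcont : ∀ k, ContinuousOn (φ k) (U k) := fun k =>
    continuous_subtype_val.comp_continuousOn
      (chartAt (EuclideanHalfSpace n) k.1).continuousOn
  set T := (ι → ℝ) × (ι → EuclideanSpace ℝ (Fin n)) with hT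
  set e : X → T := fun x => (fun k => ρ k x, fun k => ρ k x • φ k x) with hedef
  have hecont : Continuous e := by
    refine Continuous.prodMk (continuous_pi fun k => (ρ k).continuous) ?_
    refine continuous_pi fun k => ?_
    exact ρ.continuous_smul fun x hx =>
      (hφcont k).continuousAt ((hUopen k).mem_nhds (hρ k hx))
  have heinj : Function.Injective e := by
    intro x y hxy
    have h1 : ∀ k, ρ k x = ρ k y := fun k => congrFun (congrArg Prod.fst hxy) k
    have h2 : ∀ k, ρ k x • φ k x = ρ k y • φ k y :=
      fun k => congrFun (congrArg Prod.snd hxy) k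
    obtain ⟨k, hk⟩ : ∃ k, ρ k x ≠ 0 := by
      by_contra h
      push_neg at h
      have := ρ.sum_eq_one (mem_univ x)
      rw [finsum_eq_zero_of_forall_eq_zero h] at this
      exact zero_ne_one this
    have hxU : x ∈ U k := hρ k (subset_tsupport _ hk)
    have hyU : y ∈ U k := by
      refine hρ k (subset_tsupport _ ?_)
      show (ρ k) y ≠ 0
      rw [← h1 k]; exact hk
    have hφeq : φ k x = φ k y := by
      have h2' := h2 k
      rw [← h1 k] at h2'
      exact smul_right_injective _ hk h2'
    have := (chartAt (EuclideanHalfSpace n) k.1).injOn hxU hyU (Subtype.ext hφeq)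
    exact this
  set M := Module.finrank ℝ T with hM
  set e' : X → EuclideanSpace ℝ (Fin M) := fun x => toEuclidean (e x) with he'
  have he'cont : Continuous e' := toEuclidean.continuous.comp hecont
  have he'inj : Function.Injective e' := toEuclidean.injective.comp heinj
  -- Step 2: a continuous function `f : X → ℝ`, nonnegative, vanishing exactly
  -- on the boundary.
  have hBclosed : IsClosed ((𝓡∂ n).boundary X) := aux_isClosed_mfd_boundary
  letI : MetricSpace X := TopologicalSpace.metrizableSpaceMetric X
  obtain ⟨f, hfcont, hfnonneg, hfzero, hfpos⟩ :
      ∃ f : X → ℝ, Continuous f ∧ (∀ x, 0 ≤ f x) ∧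
        (∀ x ∈ (𝓡∂ n).boundary X, f x = 0) ∧
        (∀ x ∈ (𝓡∂ n).interior X, 0 < f x) := by
    by_cases hB : (𝓡∂ n).boundary X = ∅
    · exact ⟨fun _ => 1, continuous_const, fun _ => zero_le_one,
        fun x hx => absurd (hB ▸ hx) (notMem_empty x), fun _ _ => one_pos⟩
    · refine ⟨fun x => infDist x ((𝓡∂ n).boundary X),
        continuous_infDist_pt _, fun x => infDist_nonneg,
        fun x hx => infDist_zero_of_mem hx, fun x hx => ?_⟩
      have hxnot : x ∉ (𝓡∂ n).boundary X := by
        rw [← ModelWithCorners.compl_boundary] at hx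
        exact hx
      exact (hBclosed.notMem_iff_infDist_pos (nonempty_iff_ne_empty.mpr hB)).mp hxnot
  -- Step 3: assemble.
  refine ⟨M + 1, Nat.succ_pos M, fun x =>
    (EuclideanSpace.equiv (Fin (M + 1)) ℝ).symm
      (Fin.snoc ((EuclideanSpace.equiv (Fin M) ℝ) (e' x)) (f x)), ?_, ?_, ?_, ?_⟩
  · -- embedding
    have hicont : Continuous fun x =>
        (EuclideanSpace.equiv (Fin (M + 1)) ℝ).symm
          (Fin.snoc ((EuclideanSpace.equiv (Fin M) ℝ) (e' x)) (f x)) := by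
      refine (EuclideanSpace.equiv (Fin (M + 1)) ℝ).symm.continuous.comp ?_
      refine continuous_pi fun j => ?_
      refine Fin.lastCases ?_ ?_ j
      · simpa [Fin.snoc_last] using hfcont
      · intro j
        simp only [Fin.snoc_castSucc]
        exact (continuous_apply j).comp
          ((EuclideanSpace.equiv (Fin M) ℝ).continuous.comp he'cont)
    have hiinj : Function.Injective fun x =>
        (EuclideanSpace.equiv (Fin (M + 1)) ℝ).symm
          (Fin.snoc ((EuclideanSpace.equiv (Fin M) ℝ) (e' x)) (f x)) := by
      intro x y hxy
      have h := (EuclideanSpace.equiv (Fin (M + 1)) ℝ).symm.injective hxy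
      have h2 : ((EuclideanSpace.equiv (Fin M) ℝ) (e' x)) =
          ((EuclideanSpace.equiv (Fin M) ℝ) (e' y)) := by
        have := congrArg Fin.init h
        rwa [Fin.init_snoc, Fin.init_snoc] at this
      exact he'inj ((EuclideanSpace.equiv (Fin M) ℝ).injective h2)
    exact (hicont.isClosedEmbedding hiinj).isEmbedding
  · intro x
    show (Fin.snoc ((EuclideanSpace.equiv (Fin M) ℝ) (e' x)) (f x) : Fin (M+1) → ℝ)
        ⟨M + 1 - 1, by omega⟩ ≥ 0
    have : (⟨M + 1 - 1, by omega⟩ : Fin (M + 1)) = Fin.last M := rfl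
    rw [this, Fin.snoc_last]
    exact hfnonneg x
  · intro x hx
    show (Fin.snoc ((EuclideanSpace.equiv (Fin M) ℝ) (e' x)) (f x) : Fin (M+1) → ℝ)
        ⟨M + 1 - 1, by omega⟩ = 0
    have : (⟨M + 1 - 1, by omega⟩ : Fin (M + 1)) = Fin.last M := rfl
    rw [this, Fin.snoc_last]
    exact hfzero x hx
  · intro x hx
    show (Fin.snoc ((EuclideanSpace.equiv (Fin M) ℝ) (e' x)) (f x) : Fin (M+1) → ℝ)
        ⟨M + 1 - 1, by omega⟩ > 0
    have : (⟨M + 1 - 1, by omega⟩ : Fin (M + 1)) = Fin.last M := rfl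
    rw [this, Fin.snoc_last]
    exact hfpos x hx
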